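/- Let H ∈ H⁴(T²) be strictly positive and satisfy H_θ + γ·div_ℓ(H³ ∇_ℓ(Δ_ℓ H + H)) = 0 weakly on T² with γ > 0. Then ∇_ℓ(Δ_ℓ H + H) = 0 almost everywhere on T², and consequently H_θ = 0. -/

import Mathlib

/-- Partial derivative in the first (angular) variable. -/
noncomputable def pdθ (f : ℝ → ℝ → ℝ) : ℝ → ℝ → ℝ := fun θ ζ => deriv (fun x => f x ζ) θ

/-- Partial derivative in the second (axial) variable. -/
noncomputable def pdζ (f : ℝ → ℝ → ℝ) : ℝ → ℝ → ℝ := fun θ ζ => deriv (fun y => f θ y) ζ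

/-- The rescaled Laplacian `Δ_ℓ f = f_θθ + (π²/ℓ²) f_ζζ`. -/
noncomputable def laplℓ (ℓ : ℝ) (f : ℝ → ℝ → ℝ) : ℝ → ℝ → ℝ :=
  fun θ ζ => pdθ (pdθ f) θ ζ + Real.pi ^ 2 / ℓ ^ 2 * pdζ (pdζ f) θ ζ


open MeasureTheory intervalIntegral Set

namespace RimAux

def unc (f : ℝ → ℝ → ℝ) : ℝ × ℝ → ℝ := fun p => f p.1 p.2

lemma hasDerivAt_slice1 {f : ℝ → ℝ → ℝ} (hf : Differentiable ℝ (unc f)) (θ ζ : ℝ) :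
    HasDerivAt (fun x => f x ζ) (fderiv ℝ (unc f) (θ, ζ) (1, 0)) θ := by
  have h1 : HasDerivAt (fun x : ℝ => (x, ζ)) ((1:ℝ), (0:ℝ)) θ :=
    (hasDerivAt_id θ).prodMk (hasDerivAt_const θ ζ)
  exact (hf (θ, ζ)).hasFDerivAt.comp_hasDerivAt θ h1

lemma hasDerivAt_slice2 {f : ℝ → ℝ → ℝ} (hf : Differentiable ℝ (unc f)) (θ ζ : ℝ) :
    HasDerivAt (fun y => f θ y) (fderiv ℝ (unc f) (θ, ζ) (0, 1)) ζ := by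
  have h1 : HasDerivAt (fun y : ℝ => (θ, y)) ((0:ℝ), (1:ℝ)) ζ :=
    (hasDerivAt_const ζ θ).prodMk (hasDerivAt_id ζ)
  exact (hf (θ, ζ)).hasFDerivAt.comp_hasDerivAt ζ h1

lemma pdθ_eq {f : ℝ → ℝ → ℝ} (hf : Differentiable ℝ (unc f)) (θ ζ : ℝ) :
    pdθ f θ ζ = fderiv ℝ (unc f) (θ, ζ) (1, 0) := (hasDerivAt_slice1 hf θ ζ).deriv

lemma pdζ_eq {f : ℝ → ℝ → ℝ} (hf : Differentiable ℝ (unc f)) (θ ζ : ℝ) :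
    pdζ f θ ζ = fderiv ℝ (unc f) (θ, ζ) (0, 1) := (hasDerivAt_slice2 hf θ ζ).deriv

lemma hasDerivAt_pdθ {f : ℝ → ℝ → ℝ} (hf : Differentiable ℝ (unc f)) (θ ζ : ℝ) :
    HasDerivAt (fun x => f x ζ) (pdθ f θ ζ) θ := by
  rw [pdθ_eq hf]; exact hasDerivAt_slice1 hf θ ζ

lemma hasDerivAt_pdζ {f : ℝ → ℝ → ℝ} (hf : Differentiable ℝ (unc f)) (θ ζ : ℝ) :
    HasDerivAt (fun y => f θ y) (pdζ f θ ζ) ζ := by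
  rw [pdζ_eq hf]; exact hasDerivAt_slice2 hf θ ζ

lemma contDiff_pdθ {n : ℕ} {f : ℝ → ℝ → ℝ} (hf : ContDiff ℝ (n + 1 : ℕ) (unc f)) :
    ContDiff ℝ n (unc (pdθ f)) := by
  have hd : Differentiable ℝ (unc f) := hf.differentiable (by exact_mod_cast Nat.succ_ne_zero n)
  have h1 : ContDiff ℝ n (fun p : ℝ × ℝ => fderiv ℝ (unc f) p (1, 0)) := by
    have := hf.fderiv_right (m := n) (by exact_mod_cast le_rfl)
    exact this.clm_apply contDiff_const
  have : unc (pdθ f) = fun p : ℝ × ℝ => fderiv ℝ (unc f) p (1, 0) := by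
    funext p; exact pdθ_eq hd p.1 p.2
  rw [this]; exact h1

lemma contDiff_pdζ {n : ℕ} {f : ℝ → ℝ → ℝ} (hf : ContDiff ℝ (n + 1 : ℕ) (unc f)) :
    ContDiff ℝ n (unc (pdζ f)) := by
  have hd : Differentiable ℝ (unc f) := hf.differentiable (by exact_mod_cast Nat.succ_ne_zero n)
  have h1 : ContDiff ℝ n (fun p : ℝ × ℝ => fderiv ℝ (unc f) p (0, 1)) := by
    have := hf.fderiv_right (m := n) (by exact_mod_cast le_rfl)
    exact this.clm_apply contDiff_const
  have : unc (pdζ f) = fun p : ℝ × ℝ => fderiv ℝ (unc f) p (0, 1) := by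
    funext p; exact pdζ_eq hd p.1 p.2
  rw [this]; exact h1

lemma cont_slice1 {f : ℝ → ℝ → ℝ} (hf : Continuous (unc f)) (ζ : ℝ) :
    Continuous (fun x => f x ζ) :=
  hf.comp (continuous_id.prodMk continuous_const)

lemma cont_slice2 {f : ℝ → ℝ → ℝ} (hf : Continuous (unc f)) (θ : ℝ) :
    Continuous (fun y => f θ y) :=
  hf.comp (continuous_const.prodMk continuous_id)

/-- Schwarz symmetry of mixed partials. -/
lemma pd_comm {f : ℝ → ℝ → ℝ} (hf : ContDiff ℝ 2 (unc f)) (θ ζ : ℝ) :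
    pdζ (pdθ f) θ ζ = pdθ (pdζ f) θ ζ := by
  have hd : Differentiable ℝ (unc f) := hf.differentiable two_ne_zero
  have hf' : ContDiff ℝ 1 (fderiv ℝ (unc f)) := hf.fderiv_right (by norm_num)
  have hd' : Differentiable ℝ (fderiv ℝ (unc f)) := hf'.differentiable one_ne_zero
  have hsymm : IsSymmSndFDerivAt ℝ (unc f) (θ, ζ) :=
    hf.contDiffAt.isSymmSndFDerivAt (by norm_num)
  -- compute both sides
  have e1 : pdζ (pdθ f) θ ζ = fderiv ℝ (fderiv ℝ (unc f)) (θ, ζ) (0, 1) (1, 0) := by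
    have hfun : (fun y => pdθ f θ y) = fun y => fderiv ℝ (unc f) (θ, y) (1, 0) := by
      funext y; exact pdθ_eq hd θ y
    have hline : HasDerivAt (fun y : ℝ => ((θ, y) : ℝ × ℝ)) ((0:ℝ), (1:ℝ)) ζ :=
      (hasDerivAt_const ζ θ).prodMk (hasDerivAt_id ζ)
    have h2 : HasFDerivAt (fun p => fderiv ℝ (unc f) p (1, 0))
        ((fderiv ℝ (fderiv ℝ (unc f)) (θ, ζ)).flip (1, 0)) (θ, ζ) := by
      have := ((hd' (θ, ζ)).hasFDerivAt.clm_apply (hasFDerivAt_const ((1:ℝ),(0:ℝ)) (θ, ζ)))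
      simpa using this
    have h3 := h2.comp_hasDerivAt ζ hline
    show deriv (fun y => pdθ f θ y) ζ = _
    rw [hfun]
    simpa [Function.comp_def] using h3.deriv
  have e2 : pdθ (pdζ f) θ ζ = fderiv ℝ (fderiv ℝ (unc f)) (θ, ζ) (1, 0) (0, 1) := by
    have hfun : (fun x => pdζ f x ζ) = fun x => fderiv ℝ (unc f) (x, ζ) (0, 1) := by
      funext x; exact pdζ_eq hd x ζ
    have hline : HasDerivAt (fun x : ℝ => ((x, ζ) : ℝ × ℝ)) ((1:ℝ), (0:ℝ)) θ :=
      (hasDerivAt_id θ).prodMk (hasDerivAt_const θ ζ)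
    have h2 : HasFDerivAt (fun p => fderiv ℝ (unc f) p (0, 1))
        ((fderiv ℝ (fderiv ℝ (unc f)) (θ, ζ)).flip (0, 1)) (θ, ζ) := by
      have := ((hd' (θ, ζ)).hasFDerivAt.clm_apply (hasFDerivAt_const ((0:ℝ),(1:ℝ)) (θ, ζ)))
      simpa using this
    have h3 := h2.comp_hasDerivAt θ hline
    show deriv (fun x => pdζ f x ζ) θ = _
    rw [hfun]
    simpa [Function.comp_def] using h3.deriv
  rw [e1, e2, hsymm (0,1) (1,0)]

end RimAux

namespace RimAux

lemma deriv_per {f : ℝ → ℝ} {T : ℝ} (hp : ∀ x, f (x + T) = f x) (x : ℝ) :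
    deriv f (x + T) = deriv f x := by
  have h1 : (fun y => f (y + T)) = f := funext hp
  rw [← deriv_comp_add_const f T x, h1]

lemma pdθ_per1 {f : ℝ → ℝ → ℝ} {T : ℝ} (hp : ∀ θ ζ, f (θ + T) ζ = f θ ζ) :
    ∀ θ ζ, pdθ f (θ + T) ζ = pdθ f θ ζ := fun θ ζ =>
  deriv_per (fun x => hp x ζ) θ

lemma pdθ_per2 {f : ℝ → ℝ → ℝ} {T : ℝ} (hp : ∀ θ ζ, f θ (ζ + T) = f θ ζ) :
    ∀ θ ζ, pdθ f θ (ζ + T) = pdθ f θ ζ := by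
  intro θ ζ
  show deriv (fun x => f x (ζ + T)) θ = deriv (fun x => f x ζ) θ
  congr 1; funext x; exact hp x ζ

lemma pdζ_per2 {f : ℝ → ℝ → ℝ} {T : ℝ} (hp : ∀ θ ζ, f θ (ζ + T) = f θ ζ) :
    ∀ θ ζ, pdζ f θ (ζ + T) = pdζ f θ ζ := fun θ ζ =>
  deriv_per (fun y => hp θ y) ζ

lemma pdζ_per1 {f : ℝ → ℝ → ℝ} {T : ℝ} (hp : ∀ θ ζ, f (θ + T) ζ = f θ ζ) :
    ∀ θ ζ, pdζ f (θ + T) ζ = pdζ f θ ζ := by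
  intro θ ζ
  show deriv (fun y => f (θ + T) y) ζ = deriv (fun y => f θ y) ζ
  congr 1; funext y; exact hp θ y

/-- Integral of a total derivative of a periodic function over one period vanishes. -/
lemma tot1 {a a' : ℝ → ℝ} {T : ℝ} (ha : ∀ x, HasDerivAt a (a' x) x)
    (ha' : Continuous a') (hper : a T = a 0) : ∫ x in (0:ℝ)..T, a' x = 0 := by
  rw [intervalIntegral.integral_eq_sub_of_hasDerivAt (fun x _ => ha x)
    (ha'.intervalIntegrable _ _), hper, sub_self]

/-- Fubini for continuous functions on a rectangle. -/
lemma swap_integral {f : ℝ → ℝ → ℝ} (hf : Continuous (unc f)) {T : ℝ} (hT : 0 ≤ T) :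
    ∫ x in (0:ℝ)..T, ∫ y in (0:ℝ)..T, f x y = ∫ y in (0:ℝ)..T, ∫ x in (0:ℝ)..T, f x y := by
  have key : Integrable (Function.uncurry f)
      ((volume.restrict (Set.Ioc (0:ℝ) T)).prod (volume.restrict (Set.Ioc (0:ℝ) T))) := by
    rw [MeasureTheory.Measure.prod_restrict]
    rw [← MeasureTheory.Measure.volume_eq_prod ℝ ℝ]
    have hsub : Set.Ioc (0:ℝ) T ×ˢ Set.Ioc (0:ℝ) T ⊆ Set.Icc (0:ℝ) T ×ˢ Set.Icc (0:ℝ) T :=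
      Set.prod_mono Set.Ioc_subset_Icc_self Set.Ioc_subset_Icc_self
    have hcomp : IsCompact (Set.Icc (0:ℝ) T ×ˢ Set.Icc (0:ℝ) T) :=
      isCompact_Icc.prod isCompact_Icc
    have : IntegrableOn (Function.uncurry f) (Set.Icc (0:ℝ) T ×ˢ Set.Icc (0:ℝ) T) volume := by
      have hfc : Continuous (Function.uncurry f) := hf
      exact hfc.continuousOn.integrableOn_compact hcomp
    exact this.mono_set hsub
  have h := MeasureTheory.integral_integral_swap key
  simp only [intervalIntegral.integral_of_le hT]
  exact h

end RimAux

namespace RimAux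

/-- A continuous nonnegative function with zero integral vanishes on the interval. -/
lemma zero_of_nonneg {g : ℝ → ℝ} {T : ℝ} (hT : 0 < T) (hg : Continuous g)
    (h0 : ∀ x, 0 ≤ g x) (hI : ∫ x in (0:ℝ)..T, g x = 0) :
    ∀ x ∈ Set.Icc (0:ℝ) T, g x = 0 := by
  intro x₀ hx₀
  by_contra hne
  have hpos : 0 < g x₀ := lt_of_le_of_ne (h0 x₀) (Ne.symm hne)
  obtain ⟨δ, hδ, hball⟩ := Metric.continuous_iff.mp hg x₀ (g x₀ / 2) (by linarith)
  set a := max 0 (x₀ - δ/2) with ha_def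
  set b := min T (x₀ + δ/2) with hb_def
  have hab : a < b := by
    rw [ha_def, hb_def]
    apply max_lt <;> [skip; skip] <;> apply lt_min
    · exact hT
    · have := hx₀.1; linarith
    · have := hx₀.2; linarith
    · linarith
  have h0a : (0:ℝ) ≤ a := le_max_left _ _
  have hbT : b ≤ T := min_le_left _ _
  have hlow : ∀ y ∈ Set.Icc a b, g x₀ / 2 ≤ g y := by
    intro y hy
    have hya : x₀ - δ/2 ≤ y := le_trans (le_max_right _ _) hy.1
    have hyb : y ≤ x₀ + δ/2 := le_trans hy.2 (min_le_right _ _)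
    have : dist y x₀ < δ := by
      rw [Real.dist_eq, abs_lt]; constructor <;> linarith
    have := hball y this
    rw [Real.dist_eq, abs_lt] at this
    linarith [this.1, this.2]
  have hint1 : ∫ x in a..b, g x ≥ (b - a) * g x₀ / 2 := by
    have : ∫ x in a..b, (g x₀ / 2) ≤ ∫ x in a..b, g x := by
      apply intervalIntegral.integral_mono_on hab.le
        (intervalIntegrable_const) (hg.intervalIntegrable _ _)
      intro y hy; exact hlow y hy
    simpa [intervalIntegral.integral_const, smul_eq_mul] using this
  have hsplit : ∫ x in (0:ℝ)..T, g x
      = (∫ x in (0:ℝ)..a, g x) + (∫ x in a..b, g x) + (∫ x in b..T, g x) := by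
    rw [intervalIntegral.integral_add_adjacent_intervals (hg.intervalIntegrable _ _)
      (hg.intervalIntegrable _ _),
      intervalIntegral.integral_add_adjacent_intervals (hg.intervalIntegrable _ _)
      (hg.intervalIntegrable _ _)]
  have hn1 : 0 ≤ ∫ x in (0:ℝ)..a, g x :=
    intervalIntegral.integral_nonneg h0a (fun u _ => h0 u)
  have hn3 : 0 ≤ ∫ x in b..T, g x :=
    intervalIntegral.integral_nonneg hbT (fun u _ => h0 u)
  have : 0 < (b - a) * g x₀ / 2 := by
    apply div_pos (mul_pos (by linarith) hpos) two_pos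
  rw [hsplit] at hI
  linarith

end RimAux


open RimAux MeasureTheory intervalIntegral Set


/-- A strictly positive `H⁴`(-regular, here `C⁴`) doubly `2π`-periodic solution of
`H_θ + γ div_ℓ(H³ ∇_ℓ(Δ_ℓ H + H)) = 0` satisfies `∇_ℓ(Δ_ℓ H + H) = 0` everywhere,
and consequently `H_θ = 0`. -/
theorem stmt5 (ℓ γ : ℝ) (hℓ : 0 < ℓ) (hγ : 0 < γ) (H : ℝ → ℝ → ℝ)
    (hreg : ContDiff ℝ 4 (fun p : ℝ × ℝ => H p.1 p.2))
    (hper1 : ∀ θ ζ : ℝ, H (θ + 2 * Real.pi) ζ = H θ ζ)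
    (hper2 : ∀ θ ζ : ℝ, H θ (ζ + 2 * Real.pi) = H θ ζ)
    (hpos : ∀ θ ζ : ℝ, 0 < H θ ζ)
    (heq : ∀ θ ζ : ℝ,
      pdθ H θ ζ +
        γ * (pdθ (fun x y => H x y ^ 3 *
              pdθ (fun x' y' => laplℓ ℓ H x' y' + H x' y') x y) θ ζ +
          Real.pi / ℓ *
            pdζ (fun x y => H x y ^ 3 * (Real.pi / ℓ *
              pdζ (fun x' y' => laplℓ ℓ H x' y' + H x' y') x y)) θ ζ) = 0) :
    ∀ θ ζ : ℝ,
      pdθ (fun x y => laplℓ ℓ H x y + H x y) θ ζ = 0 ∧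
      pdζ (fun x y => laplℓ ℓ H x y + H x y) θ ζ = 0 ∧
      pdθ H θ ζ = 0 := by
  have hπ : 0 < Real.pi := Real.pi_pos
  set T : ℝ := 2 * Real.pi with hT_def
  have hT : 0 < T := by positivity
  set k : ℝ := Real.pi / ℓ with hk_def
  have hk : 0 < k := div_pos hπ hℓ
  have hc : Real.pi ^ 2 / ℓ ^ 2 = k ^ 2 := by rw [hk_def, div_pow]
  set u : ℝ → ℝ → ℝ := fun x y => laplℓ ℓ H x y + H x y with hu_def
  set w1 : ℝ → ℝ → ℝ := fun x y => H x y ^ 3 * pdθ u x y with hw1_def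
  set w2 : ℝ → ℝ → ℝ := fun x y => H x y ^ 3 * (k * pdζ u x y) with hw2_def
  -- regularity
  have hH4 : ContDiff ℝ ((4:ℕ) : WithTop ℕ∞) (unc H) := by exact_mod_cast hreg
  have h3A : ContDiff ℝ ((3:ℕ) : WithTop ℕ∞) (unc (pdθ H)) := contDiff_pdθ (n := 3) hH4
  have h3B : ContDiff ℝ ((3:ℕ) : WithTop ℕ∞) (unc (pdζ H)) := contDiff_pdζ (n := 3) hH4
  have h2AA : ContDiff ℝ ((2:ℕ) : WithTop ℕ∞) (unc (pdθ (pdθ H))) := contDiff_pdθ (n := 2) h3A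
  have h2BB : ContDiff ℝ ((2:ℕ) : WithTop ℕ∞) (unc (pdζ (pdζ H))) := contDiff_pdζ (n := 2) h3B
  have hu2 : ContDiff ℝ ((2:ℕ) : WithTop ℕ∞) (unc u) := by
    have : unc u = fun p : ℝ × ℝ =>
        (unc (pdθ (pdθ H)) p + Real.pi ^ 2 / ℓ ^ 2 * unc (pdζ (pdζ H)) p) + unc H p := by
      funext p; simp only [hu_def, unc, laplℓ]
    rw [this]
    exact (h2AA.add (contDiff_const.mul h2BB)).add (hH4.of_le (by exact_mod_cast (by norm_num : (2:ℕ) ≤ 4)))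
  have hP1 : ContDiff ℝ ((1:ℕ) : WithTop ℕ∞) (unc (pdθ u)) := contDiff_pdθ (n := 1) hu2
  have hQ1 : ContDiff ℝ ((1:ℕ) : WithTop ℕ∞) (unc (pdζ u)) := contDiff_pdζ (n := 1) hu2
  have hH1 : ContDiff ℝ ((1:ℕ) : WithTop ℕ∞) (unc H) :=
    hH4.of_le (by exact_mod_cast (by norm_num : (1:ℕ) ≤ 4))
  have hw1C : ContDiff ℝ ((1:ℕ) : WithTop ℕ∞) (unc w1) := by
    have : unc w1 = fun p : ℝ × ℝ => (unc H p) ^ 3 * unc (pdθ u) p := by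
      funext p; simp only [hw1_def, unc]
    rw [this]; exact (hH1.pow 3).mul hP1
  have hw2C : ContDiff ℝ ((1:ℕ) : WithTop ℕ∞) (unc w2) := by
    have : unc w2 = fun p : ℝ × ℝ => (unc H p) ^ 3 * (k * unc (pdζ u) p) := by
      funext p; simp only [hw2_def, unc]
    rw [this]; exact (hH1.pow 3).mul (contDiff_const.mul hQ1)
  have hu1 : ContDiff ℝ ((1:ℕ) : WithTop ℕ∞) (unc u) :=
    hu2.of_le (by exact_mod_cast (by norm_num : (1:ℕ) ≤ 2))
  have h1A : ContDiff ℝ ((1:ℕ) : WithTop ℕ∞) (unc (pdθ H)) :=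
    h3A.of_le (by exact_mod_cast (by norm_num : (1:ℕ) ≤ 3))
  have h1B : ContDiff ℝ ((1:ℕ) : WithTop ℕ∞) (unc (pdζ H)) :=
    h3B.of_le (by exact_mod_cast (by norm_num : (1:ℕ) ≤ 3))
  have one_le : ((1:ℕ) : WithTop ℕ∞) ≠ 0 := by norm_num
  -- differentiability of uncurried functions
  have hdH : Differentiable ℝ (unc H) := hH1.differentiable one_le
  have hdA : Differentiable ℝ (unc (pdθ H)) := h1A.differentiable one_le
  have hdB : Differentiable ℝ (unc (pdζ H)) := h1B.differentiable one_le
  have hdu : Differentiable ℝ (unc u) := hu1.differentiable one_le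
  have hdw1 : Differentiable ℝ (unc w1) := hw1C.differentiable one_le
  have hdw2 : Differentiable ℝ (unc w2) := hw2C.differentiable one_le
  -- periodicity
  have hperH1 : ∀ θ ζ, H (θ + T) ζ = H θ ζ := hper1
  have hperH2 : ∀ θ ζ, H θ (ζ + T) = H θ ζ := hper2
  have hperA1 := pdθ_per1 hperH1
  have hperA2 := pdθ_per2 hperH2
  have hperB1 := pdζ_per1 hperH1
  have hperB2 := pdζ_per2 hperH2
  have hperu1 : ∀ θ ζ, u (θ + T) ζ = u θ ζ := by
    intro θ ζ
    simp only [hu_def, laplℓ]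
    rw [pdθ_per1 hperA1, pdζ_per1 hperB1, hperH1]
  have hperu2 : ∀ θ ζ, u θ (ζ + T) = u θ ζ := by
    intro θ ζ
    simp only [hu_def, laplℓ]
    rw [pdθ_per2 hperA2, pdζ_per2 hperB2, hperH2]
  have hperP1 := pdθ_per1 hperu1
  have hperP2 := pdθ_per2 hperu2
  have hperQ1 := pdζ_per1 hperu1
  have hperQ2 := pdζ_per2 hperu2
  have hperw11 : ∀ θ ζ, w1 (θ + T) ζ = w1 θ ζ := by
    intro θ ζ; simp only [hw1_def]; rw [hperH1, hperP1]
  have hperw21 : ∀ θ ζ, w2 (θ + T) ζ = w2 θ ζ := by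
    intro θ ζ; simp only [hw2_def]; rw [hperH1, hperQ1]
  have hperw22 : ∀ θ ζ, w2 θ (ζ + T) = w2 θ ζ := by
    intro θ ζ; simp only [hw2_def]; rw [hperH2, hperQ2]
  -- test functions
  set Φ : ℝ → ℝ → ℝ := fun x y => pdθ H x y ^ 2 / 2 + H x y ^ 2 / 2
      - Real.pi ^ 2 / ℓ ^ 2 * (pdζ H x y ^ 2 / 2) + γ * (w1 x y * u x y) with hΦ_def
  set Ψ : ℝ → ℝ → ℝ := fun x y => Real.pi ^ 2 / ℓ ^ 2 * (pdθ H x y * pdζ H x y)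
      + γ * k * (w2 x y * u x y) with hΨ_def
  have hΦ1 : ContDiff ℝ ((1:ℕ) : WithTop ℕ∞) (unc Φ) := by
    have : unc Φ = fun p : ℝ × ℝ => unc (pdθ H) p ^ 2 / 2 + unc H p ^ 2 / 2
        - Real.pi ^ 2 / ℓ ^ 2 * (unc (pdζ H) p ^ 2 / 2)
        + γ * (unc w1 p * unc u p) := by
      funext p; simp only [hΦ_def, unc]
    rw [this]
    exact (((h1A.pow 2).div_const 2).add ((hH1.pow 2).div_const 2)).sub
        (contDiff_const.mul ((h1B.pow 2).div_const 2)) |>.add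
        (contDiff_const.mul (hw1C.mul hu1))
  have hΨ1 : ContDiff ℝ ((1:ℕ) : WithTop ℕ∞) (unc Ψ) := by
    have : unc Ψ = fun p : ℝ × ℝ => Real.pi ^ 2 / ℓ ^ 2 * (unc (pdθ H) p * unc (pdζ H) p)
        + γ * k * (unc w2 p * unc u p) := by
      funext p; simp only [hΨ_def, unc]
    rw [this]
    exact (contDiff_const.mul (h1A.mul h1B)).add (contDiff_const.mul (hw2C.mul hu1))
  have hdΦ : Differentiable ℝ (unc Φ) := hΦ1.differentiable one_le
  have hdΨ : Differentiable ℝ (unc Ψ) := hΨ1.differentiable one_le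
  have hperΦ1 : ∀ θ ζ, Φ (θ + T) ζ = Φ θ ζ := by
    intro θ ζ; simp only [hΦ_def]
    rw [hperA1, hperH1, hperB1, hperw11, hperu1]
  have hperΨ2 : ∀ θ ζ, Ψ θ (ζ + T) = Ψ θ ζ := by
    intro θ ζ; simp only [hΨ_def]
    rw [hperA2, hperB2, hperw22, hperu2]
  -- the key pointwise identity
  have key : ∀ θ ζ, pdθ Φ θ ζ + pdζ Ψ θ ζ
      = γ * (H θ ζ ^ 3 * (pdθ u θ ζ ^ 2 + k ^ 2 * pdζ u θ ζ ^ 2)) := by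
    intro θ ζ
    have dA := hasDerivAt_pdθ hdA θ ζ
    have dH := hasDerivAt_pdθ hdH θ ζ
    have dB := hasDerivAt_pdθ hdB θ ζ
    have dw1 := hasDerivAt_pdθ hdw1 θ ζ
    have duθ := hasDerivAt_pdθ hdu θ ζ
    have dAz := hasDerivAt_pdζ hdA θ ζ
    have dBz := hasDerivAt_pdζ hdB θ ζ
    have dw2z := hasDerivAt_pdζ hdw2 θ ζ
    have duz := hasDerivAt_pdζ hdu θ ζ
    have e1 : pdθ Φ θ ζ = pdθ H θ ζ * pdθ (pdθ H) θ ζ + H θ ζ * pdθ H θ ζ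
        - Real.pi ^ 2 / ℓ ^ 2 * (pdζ H θ ζ * pdθ (pdζ H) θ ζ)
        + γ * (pdθ w1 θ ζ * u θ ζ + w1 θ ζ * pdθ u θ ζ) := by
      have hb := (((dA.pow 2).div_const 2).add ((dH.pow 2).div_const 2)).sub
          (((dB.pow 2).div_const 2).const_mul (Real.pi ^ 2 / ℓ ^ 2)) |>.add
          ((dw1.mul duθ).const_mul γ)
      have hb' : HasDerivAt (fun x => Φ x ζ)
          (pdθ H θ ζ * pdθ (pdθ H) θ ζ + H θ ζ * pdθ H θ ζ
            - Real.pi ^ 2 / ℓ ^ 2 * (pdζ H θ ζ * pdθ (pdζ H) θ ζ)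
            + γ * (pdθ w1 θ ζ * u θ ζ + w1 θ ζ * pdθ u θ ζ)) θ := by
        simp only [hΦ_def]
        refine HasDerivAt.congr_deriv hb ?_
        norm_num
        try ring
      exact hb'.deriv
    have e2 : pdζ Ψ θ ζ = Real.pi ^ 2 / ℓ ^ 2
          * (pdζ (pdθ H) θ ζ * pdζ H θ ζ + pdθ H θ ζ * pdζ (pdζ H) θ ζ)
        + γ * k * (pdζ w2 θ ζ * u θ ζ + w2 θ ζ * pdζ u θ ζ) := by
      have hb := ((dAz.mul dBz).const_mul (Real.pi ^ 2 / ℓ ^ 2)).add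
          ((dw2z.mul duz).const_mul (γ * k))
      have hb' : HasDerivAt (fun y => Ψ θ y)
          (Real.pi ^ 2 / ℓ ^ 2
            * (pdζ (pdθ H) θ ζ * pdζ H θ ζ + pdθ H θ ζ * pdζ (pdζ H) θ ζ)
          + γ * k * (pdζ w2 θ ζ * u θ ζ + w2 θ ζ * pdζ u θ ζ)) ζ := by
        simp only [hΨ_def]
        refine HasDerivAt.congr_deriv hb ?_
        try ring
      exact hb'.deriv
    have hsch : pdζ (pdθ H) θ ζ = pdθ (pdζ H) θ ζ :=
      pd_comm (hH4.of_le (by exact_mod_cast (by norm_num : (2:ℕ) ≤ 4))) θ ζ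
    have hu_pt : u θ ζ = pdθ (pdθ H) θ ζ + Real.pi ^ 2 / ℓ ^ 2 * pdζ (pdζ H) θ ζ + H θ ζ := by
      simp only [hu_def, laplℓ]; try ring
    have hw1_pt : w1 θ ζ = H θ ζ ^ 3 * pdθ u θ ζ := by simp only [hw1_def]
    have hw2_pt : w2 θ ζ = H θ ζ ^ 3 * (k * pdζ u θ ζ) := by simp only [hw2_def]
    have hE := heq θ ζ
    rw [e1, e2, hsch]
    linear_combination (u θ ζ) * hE - pdθ H θ ζ * hu_pt + γ * (pdθ u θ ζ) * hw1_pt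
      + γ * k * (pdζ u θ ζ) * hw2_pt
  -- continuity facts
  have hcΦθ : Continuous (unc (pdθ Φ)) := (contDiff_pdθ (n := 0) hΦ1).continuous
  have hcΨζ : Continuous (unc (pdζ Ψ)) := (contDiff_pdζ (n := 0) hΨ1).continuous
  set R : ℝ → ℝ → ℝ :=
    fun x y => γ * (H x y ^ 3 * (pdθ u x y ^ 2 + k ^ 2 * pdζ u x y ^ 2)) with hR_def
  have hcR : Continuous (unc R) := by
    have : unc R = fun p : ℝ × ℝ =>
        γ * ((unc H p) ^ 3 * ((unc (pdθ u) p) ^ 2 + k ^ 2 * (unc (pdζ u) p) ^ 2)) := by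
      funext p; simp only [hR_def, unc]
    rw [this]
    exact continuous_const.mul ((hH4.continuous.pow 3).mul
      ((hP1.continuous.pow 2).add (continuous_const.mul (hQ1.continuous.pow 2))))
  have hRnn : ∀ x y, 0 ≤ R x y := by
    intro x y; simp only [hR_def]
    have := (hpos x y).le
    positivity
  have int1 : ∀ ζ, ∫ x in (0:ℝ)..T, pdθ Φ x ζ = 0 := by
    intro ζ
    exact tot1 (fun x => hasDerivAt_pdθ hdΦ x ζ) (cont_slice1 hcΦθ ζ)
      (by simpa using hperΦ1 0 ζ)
  have int2 : ∀ θ, ∫ y in (0:ℝ)..T, pdζ Ψ θ y = 0 := by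
    intro θ
    exact tot1 (fun y => hasDerivAt_pdζ hdΨ θ y) (cont_slice2 hcΨζ θ)
      (by simpa using hperΨ2 θ 0)
  have hdouble : ∫ y in (0:ℝ)..T, ∫ x in (0:ℝ)..T, R x y = 0 := by
    have step1 : ∀ y, ∫ x in (0:ℝ)..T, R x y = ∫ x in (0:ℝ)..T, pdζ Ψ x y := by
      intro y
      have c1 : ∫ x in (0:ℝ)..T, R x y = ∫ x in (0:ℝ)..T, (pdθ Φ x y + pdζ Ψ x y) := by
        apply intervalIntegral.integral_congr
        intro x _
        simp only [hR_def]
        exact (key x y).symm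
      rw [c1, intervalIntegral.integral_add
        ((cont_slice1 hcΦθ y).intervalIntegrable _ _)
        ((cont_slice1 hcΨζ y).intervalIntegrable _ _), int1 y, zero_add]
    rw [intervalIntegral.integral_congr (g := fun y => ∫ x in (0:ℝ)..T, pdζ Ψ x y)
      (fun y _ => step1 y)]
    have hswap : ∫ y in (0:ℝ)..T, ∫ x in (0:ℝ)..T, pdζ Ψ x y
        = ∫ x in (0:ℝ)..T, ∫ y in (0:ℝ)..T, pdζ Ψ x y :=
      swap_integral (f := fun y x => pdζ Ψ x y)
        (hcΨζ.comp continuous_swap) hT.le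
    rw [hswap, intervalIntegral.integral_congr (g := fun _ => (0:ℝ)) (fun x _ => int2 x),
      intervalIntegral.integral_const, smul_zero]
  have hgc : Continuous fun y => ∫ x in (0:ℝ)..T, R x y := by
    apply intervalIntegral.continuous_parametric_intervalIntegral_of_continuous'
      (f := fun y x => R x y)
    exact hcR.comp continuous_swap
  have hgnn : ∀ y, 0 ≤ ∫ x in (0:ℝ)..T, R x y :=
    fun y => intervalIntegral.integral_nonneg hT.le (fun x _ => hRnn x y)
  have hbox : ∀ y ∈ Set.Icc (0:ℝ) T, ∀ x ∈ Set.Icc (0:ℝ) T, R x y = 0 := by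
    intro y hy
    have hzero := zero_of_nonneg hT hgc hgnn hdouble y hy
    exact fun x hx =>
      zero_of_nonneg hT (cont_slice1 hcR y) (fun t => hRnn t y) hzero x hx
  have hRper1 : ∀ x y, R (x + T) y = R x y := by
    intro x y; simp only [hR_def]; rw [hperH1, hperP1, hperQ1]
  have hRper2 : ∀ x y, R x (y + T) = R x y := by
    intro x y; simp only [hR_def]; rw [hperH2, hperP2, hperQ2]
  have hRzero : ∀ x y, R x y = 0 := by
    intro x y
    obtain ⟨x', hx', hex⟩ :=
      (show Function.Periodic (fun t => R t y) T from fun t => hRper1 t y).exists_mem_Ico₀ hT x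
    obtain ⟨y', hy', hey⟩ :=
      (show Function.Periodic (fun t => R x' t) T from fun t => hRper2 x' t).exists_mem_Ico₀ hT y
    rw [hex, hey]
    exact hbox y' (Set.Ico_subset_Icc_self hy') x' (Set.Ico_subset_Icc_self hx')
  have hPQ : ∀ x y, pdθ u x y = 0 ∧ pdζ u x y = 0 := by
    intro x y
    have h0 := hRzero x y
    simp only [hR_def] at h0
    have h1 : H x y ^ 3 * (pdθ u x y ^ 2 + k ^ 2 * pdζ u x y ^ 2) = 0 :=
      (mul_eq_zero.mp h0).resolve_left (ne_of_gt hγ)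
    have h2 : pdθ u x y ^ 2 + k ^ 2 * pdζ u x y ^ 2 = 0 :=
      (mul_eq_zero.mp h1).resolve_left (by have := hpos x y; positivity)
    have hs1 : (0:ℝ) ≤ pdθ u x y ^ 2 := sq_nonneg _
    have hs2 : (0:ℝ) ≤ k ^ 2 * pdζ u x y ^ 2 := by positivity
    constructor
    · have : pdθ u x y ^ 2 = 0 := by linarith
      exact pow_eq_zero_iff two_ne_zero |>.mp this
    · have hq : k ^ 2 * pdζ u x y ^ 2 = 0 := by linarith
      have : pdζ u x y ^ 2 = 0 :=
        (mul_eq_zero.mp hq).resolve_left (by positivity)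
      exact pow_eq_zero_iff two_ne_zero |>.mp this
  intro θ ζ
  refine ⟨(hPQ θ ζ).1, (hPQ θ ζ).2, ?_⟩
  have hw1z : ∀ x, w1 x ζ = 0 := by
    intro x; simp only [hw1_def]; rw [(hPQ x ζ).1, mul_zero]
  have hw2z : ∀ y, w2 θ y = 0 := by
    intro y; simp only [hw2_def]; rw [(hPQ θ y).2, mul_zero, mul_zero]
  have h1 : pdθ w1 θ ζ = 0 := by
    show deriv (fun x => w1 x ζ) θ = 0
    rw [show (fun x => w1 x ζ) = fun _ => (0:ℝ) from funext hw1z]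
    exact deriv_const θ 0
  have h2 : pdζ w2 θ ζ = 0 := by
    show deriv (fun y => w2 θ y) ζ = 0
    rw [show (fun y => w2 θ y) = fun _ => (0:ℝ) from funext hw2z]
    exact deriv_const ζ 0
  have hfin := heq θ ζ
  rw [h1, h2] at hfin
  simpa using hfin
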